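/- Let X : [0,∞) → ℝ be càdlàg with X_0 = 0, and define for s ≥ 0: βH_s = X_s - inf_{0≤r≤s} X_r - Σ_{0≤r≤s} Δ\bar{X}^s_r, where \bar{X}^s_r = inf_{r≤u≤s} X_u and Δ\bar{X}^s_r denotes the jump of r ↦ \bar{X}^s_r at r. Then for all 0 ≤ s ≤ s+h, β(H_{s+h} - H_s) ≥ inf_{s ≤ r ≤ s+h} X_r - X_s; in particular (H_{s+h} - H_s)⁻ ≤ β^{-1} sup_{0≤r≤s, 0≤u-r≤h, u≤s+h} (X_u - X_r)⁻. -/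

import Mathlib

/-- The future infimum `\bar X^s_r = inf_{r ≤ u ≤ s} X_u`. -/
noncomputable def futureInf (X : ℝ → ℝ) (s r : ℝ) : ℝ :=
  sInf (X '' Set.Icc r s)

/-- The jump `Δ \bar X^s_r` of the nondecreasing map `r ↦ \bar X^s_r` at `r`. -/
noncomputable def futureInfJump (X : ℝ → ℝ) (s r : ℝ) : ℝ :=
  if 0 < r then futureInf X s r - sSup ((fun u => futureInf X s u) '' Set.Ico 0 r)
  else 0

open Set

/-- A path with right limits (right-continuous) and left limits is bounded on `[0, T]`. -/
lemma cadlag_exists_bound {X : ℝ → ℝ}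
    (hrc : ∀ u : ℝ, ContinuousWithinAt X (Set.Ici u) u)
    (hll : ∀ u : ℝ, 0 < u → ∃ l : ℝ,
      Filter.Tendsto X (nhdsWithin u (Set.Iio u)) (nhds l))
    (T : ℝ) : ∃ M : ℝ, ∀ v ∈ Set.Icc (0:ℝ) T, |X v| ≤ M := by
  have loc : ∀ u : ℝ, ∃ V ∈ nhds u, ∃ M : ℝ, ∀ v ∈ V, 0 ≤ v → |X v| ≤ M := by
    intro u
    have h1 : ∀ᶠ v in nhdsWithin u (Set.Ici u), |X v - X u| < 1 :=
      (hrc u).eventually (eventually_abs_sub_lt (X u) one_pos)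
    rw [eventually_nhdsWithin_iff] at h1
    rcases le_or_gt u 0 with hu | hu
    · refine ⟨_, h1, |X u| + 1, fun v hv hv0 => ?_⟩
      have h2 := hv (hu.trans hv0)
      have := abs_sub_abs_le_abs_sub (X v) (X u)
      linarith
    · obtain ⟨l, hl⟩ := hll u hu
      have h2 : ∀ᶠ v in nhdsWithin u (Set.Iio u), |X v - l| < 1 :=
        hl.eventually (eventually_abs_sub_lt l one_pos)
      rw [eventually_nhdsWithin_iff] at h2
      refine ⟨_, h1.and h2, max (|X u| + 1) (|l| + 1), fun v hv _ => ?_⟩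
      rcases lt_or_ge v u with hvu | hvu
      · have h3 := hv.2 hvu
        have := abs_sub_abs_le_abs_sub (X v) l
        have := le_max_right (|X u| + 1) (|l| + 1)
        linarith
      · have h3 := hv.1 hvu
        have := abs_sub_abs_le_abs_sub (X v) (X u)
        have := le_max_left (|X u| + 1) (|l| + 1)
        linarith
  choose V hV M hM using loc
  rcases le_or_gt 0 T with hT | hT
  · obtain ⟨F, -, hF⟩ :=
      (isCompact_Icc : IsCompact (Set.Icc (0:ℝ) T)).elim_nhds_subcover V (fun u _ => hV u)
    refine ⟨∑ u ∈ F, |M u|, fun v hv => ?_⟩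
    obtain ⟨u, hu, hvu⟩ := Set.mem_iUnion₂.1 (hF hv)
    calc |X v| ≤ M u := hM u v hvu hv.1
      _ ≤ |M u| := le_abs_self _
      _ ≤ ∑ u ∈ F, |M u| := Finset.single_le_sum (f := fun u => |M u|) (fun _ _ => abs_nonneg _) hu
  · exact ⟨0, fun v hv => absurd (hv.1.trans hv.2) (not_le.2 hT)⟩

section FutureInf

variable {X : ℝ → ℝ} {M T : ℝ}

lemma fi_bddBelow (hb : ∀ v ∈ Set.Icc (0:ℝ) T, |X v| ≤ M) {s : Set ℝ}
    (hs : s ⊆ Set.Icc 0 T) : BddBelow (X '' s) :=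
  ⟨-M, fun y ⟨v, hv, hy⟩ => hy ▸ neg_le_of_abs_le (hb v (hs hv))⟩

lemma futureInf_le (hb : ∀ v ∈ Set.Icc (0:ℝ) T, |X v| ≤ M) {r u : ℝ}
    (hr : 0 ≤ r) (hru : r ≤ u) (huT : u ≤ T) : futureInf X T r ≤ X u :=
  csInf_le (fi_bddBelow hb (Set.Icc_subset_Icc_left hr)) ⟨u, ⟨hru, huT⟩, rfl⟩

lemma futureInf_mono (hb : ∀ v ∈ Set.Icc (0:ℝ) T, |X v| ≤ M) {r₁ r₂ : ℝ}
    (h1 : 0 ≤ r₁) (h12 : r₁ ≤ r₂) (h2 : r₂ ≤ T) :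
    futureInf X T r₁ ≤ futureInf X T r₂ := by
  apply csInf_le_csInf (fi_bddBelow hb (Set.Icc_subset_Icc_left h1))
  · exact ⟨X r₂, ⟨r₂, ⟨le_rfl, h2⟩, rfl⟩⟩
  · exact Set.image_mono (Set.Icc_subset_Icc_left h12)

lemma futureInf_self (X : ℝ → ℝ) (T : ℝ) : futureInf X T T = X T := by
  simp [futureInf, Set.Icc_self]

lemma futureInf_split (hb : ∀ v ∈ Set.Icc (0:ℝ) T, |X v| ≤ M) {r s : ℝ}
    (hr : 0 ≤ r) (hrs : r ≤ s) (hsT : s ≤ T) :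
    futureInf X T r = min (futureInf X s r) (futureInf X T s) := by
  have h0s : 0 ≤ s := hr.trans hrs
  have hsub : Set.Icc s T ⊆ Set.Icc 0 T := Set.Icc_subset_Icc_left h0s
  have hsub' : Set.Icc r s ⊆ Set.Icc 0 T := Set.Icc_subset_Icc hr hsT
  rw [futureInf, ← Set.Icc_union_Icc_eq_Icc hrs hsT, Set.image_union]
  rw [csInf_union (fi_bddBelow hb hsub') ⟨X s, ⟨s, ⟨hrs, le_rfl⟩, rfl⟩⟩
    (fi_bddBelow hb hsub) ⟨X s, ⟨s, ⟨le_rfl, hsT⟩, rfl⟩⟩]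
  rfl

lemma fi_sup_bddAbove (hb : ∀ v ∈ Set.Icc (0:ℝ) T, |X v| ≤ M) (hT : 0 ≤ T) {r : ℝ}
    (hr : r ≤ T) : BddAbove ((fun u => futureInf X T u) '' Set.Ico 0 r) := by
  refine ⟨X T, fun y ⟨u, hu, hy⟩ => hy ▸ ?_⟩
  exact futureInf_le hb hu.1 (le_trans hu.2.le hr) le_rfl

lemma fi_sup_le (hb : ∀ v ∈ Set.Icc (0:ℝ) T, |X v| ≤ M) {r : ℝ}
    (hr0 : 0 < r) (hrT : r ≤ T) :
    sSup ((fun u => futureInf X T u) '' Set.Ico 0 r) ≤ futureInf X T r := by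
  apply csSup_le ((Set.nonempty_Ico.2 hr0).image _)
  rintro y ⟨u, hu, rfl⟩
  exact futureInf_mono hb hu.1 hu.2.le hrT

lemma fi_le_sup (hb : ∀ v ∈ Set.Icc (0:ℝ) T, |X v| ≤ M) (hT : 0 ≤ T) {r c : ℝ}
    (hc : c ∈ Set.Ico 0 r) (hrT : r ≤ T) :
    futureInf X T c ≤ sSup ((fun u => futureInf X T u) '' Set.Ico 0 r) :=
  le_csSup (fi_sup_bddAbove hb hT hrT) ⟨c, hc, rfl⟩

lemma jump_nonneg (hb : ∀ v ∈ Set.Icc (0:ℝ) T, |X v| ≤ M) {r : ℝ}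
    (hr : 0 ≤ r) (hrT : r ≤ T) : 0 ≤ futureInfJump X T r := by
  rcases hr.lt_or_eq with h | h
  · rw [futureInfJump, if_pos h]
    have := fi_sup_le hb h hrT
    linarith
  · rw [futureInfJump, if_neg (by rw [← h]; exact lt_irrefl 0)]

lemma jump_le (hb : ∀ v ∈ Set.Icc (0:ℝ) T, |X v| ≤ M) (hT : 0 ≤ T) {r c : ℝ}
    (hc : c ∈ Set.Ico 0 r) (hrT : r ≤ T) :
    futureInfJump X T r ≤ futureInf X T r - futureInf X T c := by
  rw [futureInfJump, if_pos (hc.1.trans_lt hc.2)]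
  have := fi_le_sup hb hT hc hrT
  linarith

lemma jump_sum_le (hb : ∀ v ∈ Set.Icc (0:ℝ) T, |X v| ≤ M) (hT : 0 ≤ T) (F : Finset ℝ) :
    ∀ {c b : ℝ}, 0 ≤ c → c ≤ b → b ≤ T → (∀ r ∈ F, r ∈ Set.Ioc c b) →
      ∑ r ∈ F, futureInfJump X T r ≤ futureInf X T b - futureInf X T c := by
  classical
  induction F using Finset.induction_on_max with
  | empty =>
    intro c b hc hcb hbT _
    rw [Finset.sum_empty]
    have := futureInf_mono hb hc hcb hbT
    linarith
  | insert a F ha IH =>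
    intro c b hc hcb hbT hF
    have haF : a ∉ F := fun h => lt_irrefl a (ha a h)
    have hab : a ∈ Set.Ioc c b := hF a (Finset.mem_insert_self a F)
    have haT : a ≤ T := hab.2.trans hbT
    have hfab : futureInf X T a ≤ futureInf X T b :=
      futureInf_mono hb (hc.trans hab.1.le) hab.2 hbT
    rw [Finset.sum_insert haF]
    rcases F.eq_empty_or_nonempty with rfl | hFne
    · rw [Finset.sum_empty]
      have h1 : futureInfJump X T a ≤ futureInf X T a - futureInf X T c :=
        jump_le hb hT ⟨hc, hab.1⟩ haT
      linarith
    · set b' := F.max' hFne with hb'def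
      have hb'F : b' ∈ F := F.max'_mem hFne
      have hb'a : b' < a := ha b' hb'F
      have hb' : b' ∈ Set.Ioc c b := hF b' (Finset.mem_insert_of_mem hb'F)
      have IH' : ∑ r ∈ F, futureInfJump X T r ≤ futureInf X T b' - futureInf X T c := by
        refine IH hc hb'.1.le (hb'.2.trans hbT) fun r hr => ⟨(hF r (Finset.mem_insert_of_mem hr)).1, F.le_max' r hr⟩
      have h1 : futureInfJump X T a ≤ futureInf X T a - futureInf X T b' :=
        jump_le hb hT ⟨hc.trans hb'.1.le, hb'a⟩ haT
      linarith

lemma summable_jumpOn (hb : ∀ v ∈ Set.Icc (0:ℝ) T, |X v| ≤ M) (hT : 0 ≤ T)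
    {s : Set ℝ} (hs : s ⊆ Set.Icc 0 T) :
    Summable (fun r : s => futureInfJump X T r) := by
  classical
  apply summable_of_sum_le (c := futureInf X T T - futureInf X T 0)
  · intro r
    exact jump_nonneg hb (hs r.2).1 (hs r.2).2
  · intro u
    have hinj : Set.InjOn (Subtype.val : s → ℝ) u := fun x _ y _ h => Subtype.ext h
    rw [show (∑ x ∈ u, futureInfJump X T ↑x) = ∑ r ∈ u.image Subtype.val, futureInfJump X T r
        from (Finset.sum_image hinj).symm]
    rw [← Finset.sum_erase (a := (0:ℝ)) _ (by rw [futureInfJump, if_neg (lt_irrefl 0)])]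
    apply jump_sum_le hb hT _ le_rfl hT le_rfl
    intro r hr
    have hr0 : r ≠ 0 := Finset.ne_of_mem_erase hr
    obtain ⟨x, -, rfl⟩ := Finset.mem_image.1 (Finset.mem_of_mem_erase hr)
    exact ⟨(hs x.2).1.lt_of_ne (Ne.symm hr0), (hs x.2).2⟩

lemma sSup_min_comm (hb : ∀ v ∈ Set.Icc (0:ℝ) T, |X v| ≤ M)
    {s r : ℝ} (hr : 0 < r) (hrs : r ≤ s) (hsT : s ≤ T) :
    sSup ((fun u => futureInf X T u) '' Set.Ico 0 r)
      = min (sSup ((fun u => futureInf X s u) '' Set.Ico 0 r)) (futureInf X T s) := by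
  have h0s : 0 ≤ s := hr.le.trans hrs
  have hbs : ∀ v ∈ Set.Icc (0:ℝ) s, |X v| ≤ M := fun v hv =>
    hb v ⟨hv.1, hv.2.trans hsT⟩
  have hcong : (fun u => futureInf X T u) '' Set.Ico 0 r
      = (fun x => min x (futureInf X T s)) '' ((fun u => futureInf X s u) '' Set.Ico 0 r) := by
    rw [← Set.image_comp]
    apply Set.image_congr
    intro u hu
    exact futureInf_split hb hu.1 (hu.2.le.trans hrs) hsT
  rw [hcong]
  refine (Monotone.map_csSup_of_continuousAt ?_ ?_ ?_ ?_).symm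
  · exact (continuous_id.min continuous_const).continuousAt
  · exact fun x y hxy => min_le_min hxy le_rfl
  · exact ⟨futureInf X s 0, ⟨0, ⟨le_rfl, hr⟩, rfl⟩⟩
  · exact fi_sup_bddAbove hbs h0s hrs

lemma jump_compare (hb : ∀ v ∈ Set.Icc (0:ℝ) T, |X v| ≤ M)
    {s r : ℝ} (hr : 0 ≤ r) (hrs : r ≤ s) (hsT : s ≤ T) :
    futureInfJump X T r ≤ futureInfJump X s r := by
  rcases hr.lt_or_eq with h | h
  · have hbs : ∀ v ∈ Set.Icc (0:ℝ) s, |X v| ≤ M := fun v hv =>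
      hb v ⟨hv.1, hv.2.trans hsT⟩
    rw [futureInfJump, futureInfJump, if_pos h, if_pos h]
    rw [futureInf_split hb h.le hrs hsT, sSup_min_comm hb h hrs hsT]
    have hG : sSup ((fun u => futureInf X s u) '' Set.Ico 0 r) ≤ futureInf X s r :=
      fi_sup_le hbs h hrs
    rcases min_cases (futureInf X s r) (futureInf X T s) with ⟨e, he⟩ | ⟨e, he⟩ <;>
      rcases min_cases (sSup ((fun u => futureInf X s u) '' Set.Ico 0 r)) (futureInf X T s)
        with ⟨e', he'⟩ | ⟨e', he'⟩ <;> rw [e, e'] <;> linarith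
  · rw [futureInfJump, futureInfJump, if_neg (by rw [← h]; exact lt_irrefl 0),
      if_neg (by rw [← h]; exact lt_irrefl 0)]

end FutureInf

theorem height_process_lower_increment_bound
    (β : ℝ) (hβ : 0 < β) (X : ℝ → ℝ) (hX0 : X 0 = 0)
    (hrc : ∀ u : ℝ, ContinuousWithinAt X (Set.Ici u) u)
    (hll : ∀ u : ℝ, 0 < u → ∃ l : ℝ,
      Filter.Tendsto X (nhdsWithin u (Set.Iio u)) (nhds l))
    (H : ℝ → ℝ)
    (hH : ∀ s : ℝ, 0 ≤ s →
      β * H s = X s - sInf (X '' Set.Icc 0 s)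
        - ∑' r : Set.Icc (0 : ℝ) s, futureInfJump X s r) :
    ∀ s h : ℝ, 0 ≤ s → 0 ≤ h →
      (sInf (X '' Set.Icc s (s + h)) - X s ≤ β * (H (s + h) - H s)) ∧
      max (-(H (s + h) - H s)) 0
        ≤ β⁻¹ * sSup ((fun p : ℝ × ℝ => max (-(X p.2 - X p.1)) 0)
            '' {p : ℝ × ℝ | 0 ≤ p.1 ∧ p.1 ≤ s ∧ p.1 ≤ p.2 ∧ p.2 - p.1 ≤ h ∧
                  p.2 ≤ s + h}) := by
  intro s h hs hh
  set t := s + h with htdef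
  have hst : s ≤ t := le_add_of_nonneg_right hh
  have h0t : 0 ≤ t := hs.trans hst
  obtain ⟨M, hM⟩ := cadlag_exists_bound hrc hll t
  have hMs : ∀ v ∈ Set.Icc (0:ℝ) s, |X v| ≤ M := fun v hv => hM v ⟨hv.1, hv.2.trans hst⟩
  set m := futureInf X t s with hmdef
  -- key facts
  have hft : futureInf X t t = X t := futureInf_self X t
  have hgs : futureInf X s s = X s := futureInf_self X s
  have hmXs : m ≤ X s := futureInf_le hM hs le_rfl hst
  have hf0g0 : futureInf X t 0 ≤ futureInf X s 0 := by
    show sInf (X '' Set.Icc 0 t) ≤ sInf (X '' Set.Icc 0 s)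
    apply csInf_le_csInf (fi_bddBelow hM subset_rfl)
    · exact ⟨X s, ⟨s, ⟨hs, le_rfl⟩, rfl⟩⟩
    · exact Set.image_mono (Set.Icc_subset_Icc_right hst)
  -- summability
  have Sb1 : Summable (fun r : Set.Icc (0:ℝ) s => futureInfJump X t r) :=
    summable_jumpOn hM h0t (Set.Icc_subset_Icc_right hst)
  have Sb2 : Summable (fun r : Set.Ioc s t => futureInfJump X t r) :=
    summable_jumpOn hM h0t (fun r hr => ⟨hs.trans hr.1.le, hr.2⟩)
  have Sa : Summable (fun r : Set.Icc (0:ℝ) s => futureInfJump X s r) :=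
    summable_jumpOn hMs hs (le_refl _)
  -- split the tsum over [0, t]
  have hsplit : (∑' r : Set.Icc (0:ℝ) t, futureInfJump X t r)
      = (∑' r : Set.Icc (0:ℝ) s, futureInfJump X t r)
        + ∑' r : Set.Ioc s t, futureInfJump X t r := by
    rw [← Set.Icc_union_Ioc_eq_Icc hs hst]
    exact Summable.tsum_union_disjoint
      (Set.disjoint_left.2 fun r h1 h2 => absurd h1.2 (not_le.2 h2.1)) Sb1 Sb2
  -- compare the [0, s] parts
  have hcmp : (∑' r : Set.Icc (0:ℝ) s, futureInfJump X t r)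
      ≤ ∑' r : Set.Icc (0:ℝ) s, futureInfJump X s r := by
    refine Summable.tsum_le_tsum (fun r => ?_) Sb1 Sa
    exact jump_compare hM r.2.1 r.2.2 hst
  -- bound the (s, t] part
  have htail : (∑' r : Set.Ioc s t, futureInfJump X t r) ≤ X t - m := by
    have : (∑' r : Set.Ioc s t, futureInfJump X t r) ≤ futureInf X t t - futureInf X t s := by
      refine Summable.tsum_le_of_sum_le Sb2 fun u => ?_
      classical
      have hinj : Set.InjOn (Subtype.val : Set.Ioc s t → ℝ) u := fun x _ y _ hxy => Subtype.ext hxy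
      rw [show (∑ x ∈ u, futureInfJump X t ↑x)
          = ∑ r ∈ u.image Subtype.val, futureInfJump X t r from (Finset.sum_image hinj).symm]
      apply jump_sum_le hM h0t _ hs hst le_rfl
      intro r hr
      obtain ⟨x, -, rfl⟩ := Finset.mem_image.1 hr
      exact x.2
    rwa [hft, ← hmdef] at this
  -- Part 1
  have key : sInf (X '' Set.Icc s (s + h)) - X s ≤ β * (H (s + h) - H s) := by
    have hHs := hH s hs
    have hHt := hH t h0t
    have hexp : β * (H t - H s) = β * H t - β * H s := mul_sub β _ _
    have him : sInf (X '' Set.Icc s (s + h)) = m := rfl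
    have hft' : sInf (X '' Set.Icc 0 t) = futureInf X t 0 := rfl
    have hgs' : sInf (X '' Set.Icc 0 s) = futureInf X s 0 := rfl
    rw [him, ← htdef, hexp, hHs, hHt, hft', hgs']
    have hXt : futureInf X t t = X t := hft
    linarith [hsplit, hcmp, htail, hf0g0]
  refine ⟨key, ?_⟩
  -- Part 2
  set P : Set (ℝ × ℝ) := {p : ℝ × ℝ | 0 ≤ p.1 ∧ p.1 ≤ s ∧ p.1 ≤ p.2 ∧ p.2 - p.1 ≤ h ∧
      p.2 ≤ s + h} with hPdef
  set img := (fun p : ℝ × ℝ => max (-(X p.2 - X p.1)) 0) '' P with himgdef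
  have hMnn : 0 ≤ M := (abs_nonneg _).trans (hM 0 ⟨le_rfl, h0t⟩)
  have hbdd : BddAbove img := by
    refine ⟨2 * M, ?_⟩
    rintro y ⟨p, hp, rfl⟩
    have h1 : |X p.1| ≤ M := hM p.1 ⟨hp.1, hp.2.1.trans hst⟩
    have h2 : |X p.2| ≤ M := hM p.2 ⟨hp.1.trans hp.2.2.1, hp.2.2.2.2⟩
    have := abs_le.1 h1
    have := abs_le.1 h2
    apply max_le <;> linarith
  have hmem : ((0:ℝ) ∈ img) := by
    refine ⟨(s, s), ⟨hs, le_rfl, le_rfl, by simp [hh], le_add_of_nonneg_right hh⟩, by simp⟩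
  have hSnn : 0 ≤ sSup img := le_csSup hbdd hmem
  have hXsm : X s - m ≤ sSup img := by
    rcases le_or_gt (X s) m with hc | hc
    · linarith
    · by_contra hcon
      push_neg at hcon
      set ε := (X s - m - sSup img) / 2 with hεdef
      have hε : 0 < ε := by
        rw [hεdef]; linarith
      obtain ⟨y, ⟨u, hu, rfl⟩, hy⟩ :=
        exists_lt_of_csInf_lt (⟨X s, ⟨s, ⟨le_rfl, hst⟩, rfl⟩⟩ : (X '' Set.Icc s t).Nonempty)
          (show sInf (X '' Set.Icc s t) < m + ε from by
            have hmm : sInf (X '' Set.Icc s t) = m := rfl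
            rw [hmm]; linarith)
      have hmemu : max (-(X u - X s)) 0 ∈ img := by
        refine ⟨(s, u), ⟨hs, le_rfl, hu.1, by linarith [hu.2], hu.2⟩, rfl⟩
      have hle : max (-(X u - X s)) 0 ≤ sSup img := le_csSup hbdd hmemu
      have : X s - X u ≤ max (-(X u - X s)) 0 := by
        rw [show X s - X u = -(X u - X s) by ring]
        exact le_max_left _ _
      linarith
  apply max_le
  · have h1 : β * (-(H (s + h) - H s)) ≤ X s - m := by
      have := key
      have him : sInf (X '' Set.Icc s (s + h)) = m := rfl
      rw [him] at this
      linarith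
    have h2 : β⁻¹ * (β * (-(H (s + h) - H s))) ≤ β⁻¹ * sSup img := by
      apply mul_le_mul_of_nonneg_left (h1.trans hXsm) (inv_nonneg.2 hβ.le)
    rwa [inv_mul_cancel_left₀ hβ.ne'] at h2
  · exact mul_nonneg (inv_nonneg.2 hβ.le) hSnn
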